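/- Let F be a finitely generated free group, let φ : F → F be an injective group endomorphism, and let H be a finite-index subgroup of F with φ(H) ⊆ H. Let Δ(t) = det(tI − φ^ab ⊗ 1) be the characteristic polynomial of the complex linear map induced by φ on (F/[F,F]) ⊗_ℤ ℂ, and let Δ̃(t) = det(tI − (φ|_H)^ab ⊗ 1) be the characteristic polynomial of the complex linear map induced by φ|_H on (H/[H,H]) ⊗_ℤ ℂ. Then Δ divides Δ̃ in the Laurent polynomial ring ℂ[t, t⁻¹]; equivalently, Δ(t) divides t^N · Δ̃(t) in ℂ[t] for some integer N ≥ 0. -/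

import Mathlib

open scoped TensorProduct

/-- The complex linear endomorphism of `(G/[G,G]) ⊗_ℤ ℂ` induced by a group
endomorphism `φ : G →* G`. -/
noncomputable def inducedEnd {G : Type*} [Group G] (φ : G →* G) :
    Module.End ℂ (ℂ ⊗[ℤ] Additive (Abelianization G)) :=
  ((MonoidHom.toAdditive (Abelianization.map φ)).toIntLinearMap).baseChange ℂ

/-- The restriction of an endomorphism `φ` to a `φ`-invariant subgroup `H`,
as an endomorphism of `H`. -/
def restrictHom {G : Type*} [Group G] (φ : G →* G) (H : Subgroup G)
    (hinv : ∀ x ∈ H, φ x ∈ H) : H →* H :=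
  (φ.domRestrict H).codRestrict H fun x => hinv x x.2

/-- The abelianization of a finitely generated group is a finite ℤ-module. -/
instance {G : Type*} [Group G] [Group.FG G] :
    Module.Finite ℤ (Additive (Abelianization G)) :=
  Module.Finite.iff_addGroup_fg.mpr <|
    GroupFG.iff_add_fg.mp (Group.fg_of_surjective (f := Abelianization.of (G := G))
      (fun x => Quotient.inductionOn' x fun g => ⟨g, rfl⟩))

open LinearMap Function in
lemma charpoly_dvd_of_surj {K V W : Type*} [Field K]
    [AddCommGroup V] [Module K V] [AddCommGroup W] [Module K W]
    [Module.Finite K V] [Module.Finite K W]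
    (f : Module.End K V) (g : Module.End K W) (p : W →ₗ[K] V)
    (hp : Surjective p) (hc : f ∘ₗ p = p ∘ₗ g) :
    f.charpoly ∣ g.charpoly := by
  obtain ⟨s, hs⟩ := p.exists_rightInverse_of_surjective (LinearMap.range_eq_top.2 hp)
  have hps : ∀ v, p (s v) = v := fun v => congrFun (congrArg DFunLike.coe hs) v
  set Kr : Submodule K W := LinearMap.ker p with hKr
  have hcapp : ∀ w, f (p w) = p (g w) := fun w => congrFun (congrArg DFunLike.coe hc) w
  have hginv : ∀ x ∈ Kr, g x ∈ Kr := by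
    intro x hx
    have : p x = 0 := hx
    simp [hKr, LinearMap.mem_ker, ← hcapp, this]
  -- the equivalence e : Kr × V ≃ W
  let e0 : Kr × V →ₗ[K] W := Kr.subtype.coprod s
  have hbij : Function.Bijective e0 := by
    constructor
    · intro ⟨k, v⟩ ⟨k', v'⟩ hkv
      simp only [e0, coprod_apply, Submodule.coe_subtype] at hkv
      have hk0 : p (k : W) = 0 := k.2
      have hk0' : p (k' : W) = 0 := k'.2
      have hv : v = v' := by
        have h2 := congrArg p hkv
        simpa [map_add, hps, hk0, hk0'] using h2
      subst hv
      exact Prod.ext (Subtype.ext (add_right_cancel hkv)) rfl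
    · intro w
      refine ⟨⟨⟨w - s (p w), ?_⟩, p w⟩, by simp [e0]⟩
      simp [hKr, LinearMap.mem_ker, hps]
  let e : (Kr × V) ≃ₗ[K] W := LinearEquiv.ofBijective e0 hbij
  -- the pieces
  let A : Module.End K Kr := g.restrict hginv
  let B0 : V →ₗ[K] Kr := (g ∘ₗ s - s ∘ₗ f).codRestrict Kr (by
    intro v
    simp [hKr, LinearMap.mem_ker, ← hcapp, hps])
  let h : Module.End K (Kr × V) := LinearMap.prod (A ∘ₗ fst K Kr V + B0 ∘ₗ snd K Kr V)
    (f ∘ₗ snd K Kr V)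
  have hh : h = e.symm.conj g := by
    apply LinearMap.ext
    rintro ⟨k, v⟩
    apply e.injective
    simp only [LinearEquiv.conj_apply, LinearEquiv.coe_coe, LinearMap.coe_comp,
      Function.comp_apply, LinearEquiv.apply_symm_apply]
    show e0 (h (k, v)) = g (e0 (k, v))
    simp only [e0, h, coprod_apply, Submodule.coe_subtype, prod_apply, Pi.prod,
      LinearMap.add_apply, LinearMap.coe_comp, Function.comp_apply, fst_apply, snd_apply,
      Submodule.coe_add, map_add]
    show (g k + (g (s v) - s (f v))) + s (f v) = g k + g (s v)
    abel
  -- charpoly computation via matrices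
  have : Module.Finite K Kr := Module.Finite.of_injective Kr.subtype Subtype.val_injective
  let bK := Module.Free.chooseBasis K Kr
  let bV := Module.Free.chooseBasis K V
  let b := bK.prod bV
  have hmat : LinearMap.toMatrix b b h =
      Matrix.fromBlocks (LinearMap.toMatrix bK bK A) (LinearMap.toMatrix bV bK B0) 0
        (LinearMap.toMatrix bV bV f) := by
    ext i j
    rcases i with i | i <;> rcases j with j | j <;>
      simp [b, h, LinearMap.toMatrix_apply, Module.Basis.prod_apply, Matrix.fromBlocks,
        Module.Basis.prod_repr_inl, Module.Basis.prod_repr_inr]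
  have key : g.charpoly = A.charpoly * f.charpoly := by
    rw [← e.symm.charpoly_conj g, ← hh, ← LinearMap.charpoly_toMatrix h b, hmat,
      Matrix.charpoly_fromBlocks_zero₂₁, LinearMap.charpoly_toMatrix, LinearMap.charpoly_toMatrix]
  rw [key]
  exact dvd_mul_left _ _

theorem charpoly_dvd_charpoly_restrict
    {F : Type*} [Group F] [IsFreeGroup F] [Group.FG F]
    (φ : F →* F) (hφ : Function.Injective φ) (H : Subgroup F) [H.FiniteIndex]
    (hinv : ∀ x ∈ H, φ x ∈ H) :
    ∃ N : ℕ,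
      LinearMap.charpoly (inducedEnd φ) ∣
        Polynomial.X ^ N * LinearMap.charpoly (inducedEnd (restrictHom φ H hinv)) := by
  refine ⟨0, ?_⟩
  rw [pow_zero, one_mul]
  -- the map induced by the inclusion H ↪ F
  set ι : Additive (Abelianization H) →+ Additive (Abelianization F) :=
    MonoidHom.toAdditive (Abelianization.map H.subtype) with hι
  set p : ℂ ⊗[ℤ] Additive (Abelianization H) →ₗ[ℂ] ℂ ⊗[ℤ] Additive (Abelianization F) :=
    ι.toIntLinearMap.baseChange ℂ with hp
  -- commutation
  have hZ : (MonoidHom.toAdditive (Abelianization.map φ)).toIntLinearMap ∘ₗ ι.toIntLinearMap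
      = ι.toIntLinearMap ∘ₗ
        (MonoidHom.toAdditive (Abelianization.map (restrictHom φ H hinv))).toIntLinearMap := by
    apply LinearMap.ext
    intro x
    exact Quotient.inductionOn' x fun h => rfl
  have hcomm : (inducedEnd φ) ∘ₗ p = p ∘ₗ (inducedEnd (restrictHom φ H hinv)) := by
    rw [inducedEnd, inducedEnd, hp, ← LinearMap.baseChange_comp, ← LinearMap.baseChange_comp, hZ]
  -- surjectivity
  have hsurj : Function.Surjective p := by
    rw [← LinearMap.range_eq_top, Submodule.eq_top_iff']
    have hone : ∀ x : Additive (Abelianization F), (1 : ℂ) ⊗ₜ[ℤ] x ∈ LinearMap.range p := by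
      intro x
      refine Quotient.inductionOn' x fun g => ?_
      set n := H.normalCore.index with hn
      have hn0 : (n : ℂ) ≠ 0 := Nat.cast_ne_zero.mpr (Subgroup.FiniteIndex.index_ne_zero (H := H.normalCore))
      have hgn : g ^ n ∈ H := H.normalCore_le (H.normalCore.pow_index_mem g)
      refine ⟨((n : ℂ)⁻¹) ⊗ₜ[ℤ] (Additive.ofMul (Abelianization.of (⟨g ^ n, hgn⟩ : H))), ?_⟩
      have h1 : ι (Additive.ofMul (Abelianization.of (⟨g ^ n, hgn⟩ : H)))
          = n • Additive.ofMul (Abelianization.of g) := by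
        show Additive.ofMul (Abelianization.map H.subtype (Abelianization.of (⟨g ^ n, hgn⟩ : H)))
          = n • Additive.ofMul (Abelianization.of g)
        rw [Abelianization.map_of]
        show Additive.ofMul (Abelianization.of (g ^ n)) = _
        rw [map_pow, ← ofMul_pow]
      rw [hp, LinearMap.baseChange_tmul, AddMonoidHom.coe_toIntLinearMap, h1,
        TensorProduct.tmul_smul, ← Nat.cast_smul_eq_nsmul ℂ, TensorProduct.smul_tmul',
        smul_eq_mul, mul_inv_cancel₀ hn0]
      rfl
    intro z
    induction z using TensorProduct.induction_on with
    | zero => exact Submodule.zero_mem _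
    | tmul c x =>
        have := Submodule.smul_mem (LinearMap.range p) c (hone x)
        rwa [TensorProduct.smul_tmul', smul_eq_mul, mul_one] at this
    | add a b ha hb => exact Submodule.add_mem _ ha hb
  exact charpoly_dvd_of_surj _ _ p hsurj hcomm
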